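/- Conditional on Pólya-Gamma latent variables ω_j, the logistic regression posterior for β with Gaussian prior N(b₀,B₀) is exactly Gaussian: β | Y, ω ~ N(m_n, V_n) with V_n = (B₀⁻¹ + X'ΩX)⁻¹ and m_n = V_n(B₀⁻¹b₀ + X'κ), where Ω = diag(ω₁,…,ω_n) and κ_j = y_j − 1/2. -/

import Mathlib

open Matrix

lemma symm_cross {p : ℕ} (M : Matrix (Fin p) (Fin p) ℝ) (hM : Mᵀ = M)
    (u v : Fin p → ℝ) : u ⬝ᵥ M *ᵥ v = v ⬝ᵥ M *ᵥ u := by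
  rw [dotProduct_mulVec, ← mulVec_transpose, hM, dotProduct_comm]

lemma expand_quad {p : ℕ} (M : Matrix (Fin p) (Fin p) ℝ) (hM : Mᵀ = M)
    (u w : Fin p → ℝ) :
    (u - w) ⬝ᵥ M *ᵥ (u - w)
      = u ⬝ᵥ M *ᵥ u - 2 * (u ⬝ᵥ M *ᵥ w) + w ⬝ᵥ M *ᵥ w := by
  rw [mulVec_sub, sub_dotProduct, dotProduct_sub, dotProduct_sub,
    symm_cross M hM w u]
  ring

theorem stmt15 (n p : ℕ)
    (X : Matrix (Fin n) (Fin p) ℝ) (y : Fin n → ℝ) (ω : Fin n → ℝ)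
    (b₀ : Fin p → ℝ) (B₀inv : Matrix (Fin p) (Fin p) ℝ)
    (hB : B₀inv.PosDef) (hω : ∀ j, 0 < ω j)
    (Vn : Matrix (Fin p) (Fin p) ℝ)
    (hVn : Vn * (B₀inv + Xᵀ * Matrix.diagonal ω * X) = 1)
    (mn : Fin p → ℝ)
    (hmn : mn = Vn.mulVec (B₀inv.mulVec b₀ + Xᵀ.mulVec (fun j => y j - 1/2))) :
    ∃ C : ℝ, ∀ β : Fin p → ℝ,
      (∑ j, ((y j - 1/2) * X.mulVec β j - ω j * (X.mulVec β j) ^ 2 / 2))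
        - (1/2) * ((β - b₀) ⬝ᵥ B₀inv.mulVec (β - b₀))
      = -(1/2) * ((β - mn) ⬝ᵥ (B₀inv + Xᵀ * Matrix.diagonal ω * X).mulVec (β - mn))
          + C := by
  set κ : Fin n → ℝ := fun j => y j - 1/2 with hκ
  set A : Matrix (Fin p) (Fin p) ℝ := B₀inv + Xᵀ * Matrix.diagonal ω * X with hA
  have hBs : B₀invᵀ = B₀inv := by
    have := hB.1
    simpa [Matrix.IsHermitian, Matrix.conjTranspose_eq_transpose_of_trivial] using this
  have hQs : (Xᵀ * Matrix.diagonal ω * X)ᵀ = Xᵀ * Matrix.diagonal ω * X := by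
    simp [Matrix.transpose_mul, Matrix.diagonal_transpose, Matrix.mul_assoc]
  have hAs : Aᵀ = A := by
    rw [hA, Matrix.transpose_add, hBs, hQs]
  have hAmn : A *ᵥ mn = B₀inv *ᵥ b₀ + Xᵀ *ᵥ κ := by
    rw [hmn, mulVec_mulVec, mul_eq_one_comm.mp hVn, Matrix.one_mulVec]
  refine ⟨(1/2) * (mn ⬝ᵥ A *ᵥ mn) - (1/2) * (b₀ ⬝ᵥ B₀inv *ᵥ b₀), fun β => ?_⟩
  have h1 : (∑ j, κ j * X.mulVec β j) = β ⬝ᵥ Xᵀ *ᵥ κ := by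
    rw [dotProduct_mulVec, vecMul_transpose, dotProduct_comm]
    simp [dotProduct]
  have h2 : (∑ j, ω j * (X.mulVec β j) ^ 2)
      = β ⬝ᵥ (Xᵀ * Matrix.diagonal ω * X) *ᵥ β := by
    rw [← mulVec_mulVec, ← mulVec_mulVec, dotProduct_mulVec, vecMul_transpose]
    simp only [dotProduct, mulVec_diagonal]
    exact Finset.sum_congr rfl fun j _ => by ring
  have hsum : (∑ j, (κ j * X.mulVec β j - ω j * (X.mulVec β j) ^ 2 / 2))
      = β ⬝ᵥ Xᵀ *ᵥ κ - (1/2) * (β ⬝ᵥ (Xᵀ * Matrix.diagonal ω * X) *ᵥ β) := by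
    rw [Finset.sum_sub_distrib, h1, ← h2,
      show (∑ j, ω j * (X.mulVec β j) ^ 2 / 2)
        = (∑ j, ω j * (X.mulVec β j) ^ 2) / 2 from (Finset.sum_div ..).symm]
    ring
  have hAβ : β ⬝ᵥ A *ᵥ β
      = β ⬝ᵥ B₀inv *ᵥ β + β ⬝ᵥ (Xᵀ * Matrix.diagonal ω * X) *ᵥ β := by
    rw [hA, add_mulVec, dotProduct_add]
  have hcross : β ⬝ᵥ A *ᵥ mn = β ⬝ᵥ B₀inv *ᵥ b₀ + β ⬝ᵥ Xᵀ *ᵥ κ := by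
    rw [hAmn, dotProduct_add]
  rw [hsum, expand_quad B₀inv hBs β b₀, expand_quad A hAs β mn, hAβ, hcross]
  ring
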